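/- For r = 2: define χ(n; d_1, d_2; t) := C((1-t)c_1 - 1 + d_1 + d_2, n+2) - C((1-t)c_1 - 1 + d_2, n+2) - C((1-t)c_1 - 1 + d_1, n+2) + C((1-t)c_1 - 1, n+2), where c_1 = n + 3 - d_1 - d_2. Suppose c_1 < 0, d_1 ≥ d_2 ≥ 2, 1/2 ≤ t ≤ 1 with t·c_1 ∈ ℤ. Then χ(n; d_1, d_2; t) ≥ χ(n; d_1 + 1, d_2 - 1; t). -/

import Mathlib

open Finset

/-- Generalized binomial coefficient `C(a, k) = a(a-1)⋯(a-k+1)/k!`. -/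
def gbc (a : ℚ) (k : ℕ) : ℚ :=
  (∏ i ∈ Finset.range k, (a - i)) / (Nat.factorial k)

lemma gbc_pascal (a : ℚ) (m : ℕ) : gbc (a+1) (m+1) = gbc a (m+1) + gbc a m := by
  unfold gbc
  have h1 : ∏ i ∈ range (m+1), (a + 1 - i) = (∏ i ∈ range m, (a - i)) * (a + 1) := by
    rw [Finset.prod_range_succ']
    congr 1
    · apply Finset.prod_congr rfl
      intro i _
      push_cast
      ring
    · simp
  have h2 : ∏ i ∈ range (m+1), (a - i) = (∏ i ∈ range m, (a - i)) * (a - m) := by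
    rw [Finset.prod_range_succ]
  rw [h1, h2, Nat.factorial_succ]
  have hm : ((m+1 : ℕ) : ℚ) ≠ 0 := by positivity
  have hf : ((Nat.factorial m : ℕ) : ℚ) ≠ 0 := by positivity
  push_cast
  field_simp
  ring

lemma gbc_natCast (p m : ℕ) : gbc (p:ℚ) m = (p.choose m : ℚ) := by
  induction p generalizing m with
  | zero =>
    cases m with
    | zero => simp [gbc]
    | succ m =>
      simp only [Nat.choose, Nat.cast_zero]
      unfold gbc
      rw [Finset.prod_eq_zero (Finset.mem_range.2 (Nat.succ_pos m))]
      · simp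
      · simp
  | succ p ih =>
    cases m with
    | zero => simp [gbc]
    | succ m =>
      have : ((p+1 : ℕ) : ℚ) = (p:ℚ) + 1 := by push_cast; ring
      rw [this, gbc_pascal, ih, ih, Nat.choose_succ_succ]
      push_cast
      ring

lemma gbc_reflect (x : ℚ) (m : ℕ) : gbc ((m:ℚ) - 1 - x) m = (-1)^m * gbc x m := by
  unfold gbc
  rw [← mul_div_assoc]
  congr 1
  have h := Finset.prod_range_reflect (fun i => x - i) m
  calc ∏ i ∈ range m, ((m:ℚ) - 1 - x - i)
      = ∏ i ∈ range m, (-(x - ((m - 1 - i : ℕ) : ℚ))) := by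
        apply Finset.prod_congr rfl
        intro i hi
        have hi' : i < m := Finset.mem_range.1 hi
        have : ((m - 1 - i : ℕ) : ℚ) = (m:ℚ) - 1 - i := by
          have : m - 1 - i = m - (1 + i) := by omega
          rw [this]
          have h1 : 1 + i ≤ m := by omega
          push_cast [Nat.cast_sub h1]
          ring
        rw [this]; ring
    _ = (-1)^m * ∏ i ∈ range m, (x - ((m - 1 - i : ℕ) : ℚ)) := by
        have : ∀ i ∈ range m, -(x - ((m - 1 - i : ℕ) : ℚ)) = (-1) * (x - ((m - 1 - i : ℕ) : ℚ)) := by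
          intro i _; ring
        rw [Finset.prod_congr rfl this, Finset.prod_mul_distrib, Finset.prod_const,
          Finset.card_range]
    _ = (-1)^m * ∏ i ∈ range m, (x - i) := by rw [h]

lemma gbc_choose_nonneg (p m : ℕ) : (0:ℚ) ≤ gbc (p:ℚ) m := by
  rw [gbc_natCast]; positivity

lemma gbc_int_mono (m : ℕ) (a b : ℤ) (hba : b ≤ a) (h : (m:ℤ) - 1 ≤ a + b) :
    gbc (b:ℚ) m ≤ gbc (a:ℚ) m := by
  rcases le_or_gt 0 b with hb | hb
  · lift b to ℕ using hb with p
    lift a to ℕ using (le_trans (by exact_mod_cast Int.ofNat_nonneg p) hba) with q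
    rw [show ((p:ℤ):ℚ) = (p:ℚ) by push_cast; ring, show ((q:ℤ):ℚ) = (q:ℚ) by push_cast; ring,
      gbc_natCast, gbc_natCast]
    have : p ≤ q := by exact_mod_cast hba
    exact_mod_cast Nat.choose_le_choose m this
  · set q : ℕ := ((m:ℤ) - 1 - b).toNat with hqdef
    have hq : (q:ℤ) = (m:ℤ) - 1 - b := by
      rw [hqdef, Int.toNat_of_nonneg]; omega
    have hqQ : (q:ℚ) = (m:ℚ) - 1 - (b:ℚ) := by exact_mod_cast congrArg (Int.cast : ℤ → ℚ) hq
    have hrefl := gbc_reflect ((b:ℤ):ℚ) m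
    rw [← hqQ] at hrefl
    have hbq : gbc ((b:ℤ):ℚ) m ≤ gbc (q:ℚ) m := by
      have hnn : (0:ℚ) ≤ gbc (q:ℚ) m := gbc_choose_nonneg q m
      rcases Nat.even_or_odd m with he | ho
      · rw [he.neg_one_pow, one_mul] at hrefl; linarith [hrefl]
      · have : ((-1:ℚ))^m = -1 := ho.neg_one_pow
        rw [this] at hrefl
        nlinarith [hrefl, hnn]
    have haq : (q:ℤ) ≤ a := by omega
    have ha0 : (0:ℤ) ≤ a := le_trans (by exact_mod_cast Int.ofNat_nonneg q) haq
    lift a to ℕ using ha0 with p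
    have hqa : gbc (q:ℚ) m ≤ gbc ((p:ℤ):ℚ) m := by
      rw [show ((p:ℤ):ℚ) = (p:ℚ) by push_cast; ring, gbc_natCast, gbc_natCast]
      have : q ≤ p := by exact_mod_cast haq
      exact_mod_cast Nat.choose_le_choose m this
    linarith

theorem chi_two_degrees_monotone (n : ℕ) (d1 d2 : ℤ) (hd : 2 ≤ d2) (hdd : d2 ≤ d1)
    (hc : (n : ℤ) + 3 - d1 - d2 < 0) (t : ℚ) (ht1 : 1 / 2 ≤ t) (ht2 : t ≤ 1)
    (hint : ∃ m : ℤ, t * ((n : ℚ) + 3 - d1 - d2) = m) :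
    gbc ((1 - t) * ((n : ℚ) + 3 - d1 - d2) - 1 + (d1 + 1) + (d2 - 1)) (n + 2) -
          gbc ((1 - t) * ((n : ℚ) + 3 - d1 - d2) - 1 + (d2 - 1)) (n + 2) -
          gbc ((1 - t) * ((n : ℚ) + 3 - d1 - d2) - 1 + (d1 + 1)) (n + 2) +
          gbc ((1 - t) * ((n : ℚ) + 3 - d1 - d2) - 1) (n + 2) ≤
      gbc ((1 - t) * ((n : ℚ) + 3 - d1 - d2) - 1 + d1 + d2) (n + 2) -
          gbc ((1 - t) * ((n : ℚ) + 3 - d1 - d2) - 1 + d2) (n + 2) -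
          gbc ((1 - t) * ((n : ℚ) + 3 - d1 - d2) - 1 + d1) (n + 2) +
          gbc ((1 - t) * ((n : ℚ) + 3 - d1 - d2) - 1) (n + 2) := by
  obtain ⟨m0, hm0⟩ := hint
  set c1 : ℤ := (n : ℤ) + 3 - d1 - d2 with hc1
  have hcq : ((n : ℚ) + 3 - d1 - d2) = (c1 : ℚ) := by push_cast [hc1]; ring
  set A : ℤ := c1 - m0 - 1 + d1 with hA
  set B : ℤ := c1 - m0 - 1 + d2 with hB
  have hx : (1 - t) * ((n : ℚ) + 3 - d1 - d2) - 1 = ((c1 - m0 - 1 : ℤ) : ℚ) := by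
    rw [hcq] at hm0 ⊢
    push_cast
    linarith [hm0]
  have e1 : (1 - t) * ((n : ℚ) + 3 - d1 - d2) - 1 + (d1 + 1) + (d2 - 1)
      = (1 - t) * ((n : ℚ) + 3 - d1 - d2) - 1 + d1 + d2 := by ring
  rw [e1]
  have eA : (1 - t) * ((n : ℚ) + 3 - d1 - d2) - 1 + d1 = ((A : ℤ) : ℚ) := by
    rw [hx]; push_cast [hA]; ring
  have eA1 : (1 - t) * ((n : ℚ) + 3 - d1 - d2) - 1 + (d1 + 1) = ((A : ℤ) : ℚ) + 1 := by
    rw [hx]; push_cast [hA]; ring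
  have eB : (1 - t) * ((n : ℚ) + 3 - d1 - d2) - 1 + d2 = ((B - 1 : ℤ) : ℚ) + 1 := by
    rw [hx]; push_cast [hB]; ring
  have eB1 : (1 - t) * ((n : ℚ) + 3 - d1 - d2) - 1 + (d2 - 1) = ((B - 1 : ℤ) : ℚ) := by
    rw [hx]; push_cast [hB]; ring
  rw [eA, eA1, eB, eB1]
  have hpA := gbc_pascal ((A : ℤ) : ℚ) (n + 1)
  have hpB := gbc_pascal ((B - 1 : ℤ) : ℚ) (n + 1)
  -- key inequality
  have h2m : 2 * m0 ≤ c1 := by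
    have hc1Q : ((c1 : ℤ) : ℚ) < 0 := by exact_mod_cast hc
    rw [hcq] at hm0
    have : (2 * m0 : ℚ) ≤ ((c1 : ℤ) : ℚ) := by nlinarith [hm0, ht1, hc1Q]
    exact_mod_cast this
  have hkey : gbc ((B - 1 : ℤ) : ℚ) (n + 1) ≤ gbc ((A : ℤ) : ℚ) (n + 1) :=
    gbc_int_mono (n + 1) A (B - 1) (by omega) (by push_cast; omega)
  have hn2 : n + 2 = (n + 1) + 1 := rfl
  rw [hn2] at *
  linarith [hpA, hpB, hkey]
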